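/- If the stochastic process Y is tight in sup-norm, i.e. P(‖Y‖_∞ ≥ M) → 0 as M → ∞, then the functional local half-region depth vanishes at infinity: for any strictly positive τ, sup_{‖y‖_∞ ≥ M} ld_HR(y; Y, τ) → 0 as M → ∞. -/

import Mathlib

open MeasureTheory Filter Topology
open scoped ENNReal

variable {I : Type*} [TopologicalSpace I] [CompactSpace I]
variable {Ω : Type*} [MeasurableSpace Ω]

/-- Functional local half-region depth of a curve `y` with respect to a
stochastic process `Y` with continuous trajectories, with threshold `τ`. -/
noncomputable def ldHRf (ℙ : Measure Ω) (Y : Ω → C(I, ℝ)) (y τ : C(I, ℝ)) : ℝ≥0∞ :=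
  min (ℙ {ω | ∀ t, y t - τ t ≤ Y ω t ∧ Y ω t ≤ y t})
      (ℙ {ω | ∀ t, y t ≤ Y ω t ∧ Y ω t ≤ y t + τ t})

/-- Functional half-region depth. -/
noncomputable def dHRf (ℙ : Measure Ω) (Y : Ω → C(I, ℝ)) (y : C(I, ℝ)) : ℝ≥0∞ :=
  min (ℙ {ω | ∀ t, Y ω t ≤ y t}) (ℙ {ω | ∀ t, y t ≤ Y ω t})

/-- If the process is tight in sup-norm, the functional local half-region depth
vanishes at infinity (uniformly over curves of large sup-norm). -/
theorem ldHRf_vanishing (ℙ : Measure Ω) [IsProbabilityMeasure ℙ]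
    (Y : Ω → C(I, ℝ)) (τ : C(I, ℝ))
    (hτ : ∃ c : ℝ, 0 < c ∧ ∀ t, c ≤ τ t)
    (htight : Tendsto (fun M : ℝ => ℙ {ω | M ≤ ‖Y ω‖}) atTop (𝓝 0)) :
    Tendsto (fun M : ℝ => ⨆ y ∈ {y : C(I, ℝ) | M ≤ ‖y‖}, ldHRf ℙ Y y τ)
      atTop (𝓝 0) := by
  have key : ∀ M : ℝ, (⨆ y ∈ {y : C(I, ℝ) | M ≤ ‖y‖}, ldHRf ℙ Y y τ)
      ≤ ℙ {ω | M - ‖τ‖ ≤ ‖Y ω‖} := by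
    intro M
    refine iSup₂_le fun y hy => ?_
    refine le_trans (min_le_left _ _) (measure_mono ?_)
    intro ω hω
    simp only [Set.mem_setOf_eq] at hω hy ⊢
    have hnorm : ‖Y ω - y‖ ≤ ‖τ‖ := by
      rw [ContinuousMap.norm_le _ (norm_nonneg τ)]
      intro t
      have h := hω t
      have hτt : τ t ≤ ‖τ‖ :=
        le_trans (le_abs_self _) (by simpa [Real.norm_eq_abs] using τ.norm_coe_le_norm t)
      simp only [ContinuousMap.sub_apply, Real.norm_eq_abs, abs_le]
      constructor <;> [linarith; linarith [norm_nonneg τ]]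
    have h1 : ‖y‖ - ‖Y ω‖ ≤ ‖y - Y ω‖ := norm_sub_norm_le _ _
    rw [norm_sub_rev] at h1
    linarith
  have h2 : Tendsto (fun M : ℝ => ℙ {ω | M - ‖τ‖ ≤ ‖Y ω‖}) atTop (𝓝 0) :=
    htight.comp (tendsto_atTop_add_const_right atTop (-‖τ‖) tendsto_id)
  exact tendsto_of_tendsto_of_tendsto_of_le_of_le tendsto_const_nhds h2
    (fun M => zero_le) key
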